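/- If nonnegative reals V, V̂, ε satisfy V ≤ V̂ + √(2Vε) + (2/3)ε, then V ≤ V̂ + √(2V̂ε) + 5ε. -/
import Mathlib
set_option maxHeartbeats 1000000


theorem quadratic_solve (V Vhat ε : ℝ) (hV : 0 ≤ V) (hVhat : 0 ≤ Vhat) (hε : 0 ≤ ε)
    (h : V ≤ Vhat + Real.sqrt (2 * V * ε) + (2/3) * ε) :
    V ≤ Vhat + Real.sqrt (2 * Vhat * ε) + 5 * ε := by
  set a := Real.sqrt V with hadef
  set b := Real.sqrt Vhat with hbdef
  set c := Real.sqrt ε with hcdef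
  set s := Real.sqrt 2 with hsdef
  have ha : a ^ 2 = V := Real.sq_sqrt hV
  have hb : b ^ 2 = Vhat := Real.sq_sqrt hVhat
  have hc : c ^ 2 = ε := Real.sq_sqrt hε
  have hs : s ^ 2 = 2 := Real.sq_sqrt (by norm_num)
  have ha0 : 0 ≤ a := Real.sqrt_nonneg V
  have hb0 : 0 ≤ b := Real.sqrt_nonneg Vhat
  have hc0 : 0 ≤ c := Real.sqrt_nonneg ε
  have hs0 : 0 ≤ s := Real.sqrt_nonneg 2
  have h1 : Real.sqrt (2 * V * ε) = s * a * c := by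
    rw [Real.sqrt_mul (by positivity), Real.sqrt_mul (by norm_num)]
  have h2 : Real.sqrt (2 * Vhat * ε) = s * b * c := by
    rw [Real.sqrt_mul (by positivity), Real.sqrt_mul (by norm_num)]
  rw [h1] at h
  rw [h2]
  set r := Real.sqrt (b ^ 2 + 7/6 * c ^ 2) with hrdef
  have hr0 : 0 ≤ r := Real.sqrt_nonneg _
  have hr2 : r ^ 2 = b ^ 2 + 7/6 * c ^ 2 := Real.sq_sqrt (by positivity)
  have key : a ≤ s * c / 2 + r := by
    have h3 : (a - s * c / 2) ^ 2 ≤ r ^ 2 := by nlinarith [ha, hb, hc, hs, h]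
    nlinarith [h3, hr0, ha0, mul_nonneg hs0 hc0]
  have hrb : r ≤ b + 1.1 * c := by
    have : r ^ 2 ≤ (b + 1.1 * c) ^ 2 := by nlinarith [mul_nonneg hb0 hc0]
    nlinarith [this, hr0, hb0, hc0]
  have hs32 : s ≤ 3/2 := by nlinarith
  have hsq : a ^ 2 ≤ (s * c / 2 + r) ^ 2 := pow_le_pow_left₀ ha0 key 2
  nlinarith [hsq, hr2, mul_le_mul_of_nonneg_left hrb (mul_nonneg hs0 hc0),
    mul_le_mul_of_nonneg_right hs32 (sq_nonneg c), ha, hb, hc, hs,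
    mul_nonneg hb0 hc0, sq_nonneg c]
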